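/- arXiv:2510.18258 — 2 statements merged into one kernel-verified Lean document; each statement's English description precedes it below -/
import Mathlib

section
/- Let p, n be positive integers, let f : Fin n → (EuclideanSpace ℝ (Fin p) → ℝ) be a family of differentiable functions (f i θ is the network output on the i-th data point at parameters θ), and let y : Fin n → ℝ be labels. Define the loss L(θ) = Σ_{i} (1/2)·(f i θ − y i)². Suppose θ : ℝ → EuclideanSpace ℝ (Fin p) is differentiable and satisfies the gradient-flow equation θ'(t) = −∇L(θ(t)) for all t ∈ ℝ. Then for every j : Fin n and every t ∈ ℝ, the map t ↦ f j (θ(t)) is differentiable at t with derivative d/dt [f j (θ(t))] = − Σ_{i} ⟨∇(f j)(θ(t)), ∇(f i)(θ(t))⟩ · (f i (θ(t)) − y i). Equivalently, writing O(t) = (f i (θ(t)))_{i} and K(t) the matrix with entries K_{uv}(t) = ⟨∇(f u)(θ(t)), ∇(f v)(θ(t))⟩, one has O'(t) = −K(t)·(O(t) − y). -/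
open scoped RealInnerProductSpace

/-- Theorem 3.1 (NTK evolution under gradient flow, single task):
along a gradient-flow trajectory for the squared loss, the output on each data
point evolves according to the NTK matrix. -/
theorem ntk_gradient_flow_evolution
    (p n : ℕ) (hp : 0 < p) (hn : 0 < n)
    (f : Fin n → EuclideanSpace ℝ (Fin p) → ℝ)
    (hf : ∀ i, Differentiable ℝ (f i))
    (y : Fin n → ℝ)
    (θ : ℝ → EuclideanSpace ℝ (Fin p))
    (hθ : Differentiable ℝ θ)
    (hflow : ∀ t : ℝ, deriv θ t =
      -gradient (fun w => ∑ i, (1 / 2 : ℝ) * (f i w - y i) ^ 2) (θ t))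
    (j : Fin n) (t : ℝ) :
    HasDerivAt (fun s => f j (θ s))
      (-∑ i, ⟪gradient (f j) (θ t), gradient (f i) (θ t)⟫ * (f i (θ t) - y i)) t := by
  set x := θ t with hx
  -- gradient/fderiv relation
  have hfd : ∀ (i : Fin n) (v : EuclideanSpace ℝ (Fin p)),
      fderiv ℝ (f i) x v = ⟪gradient (f i) x, v⟫ := by
    intro i v
    have h := ((hf i) x).hasGradientAt.hasFDerivAt
    rw [h.fderiv]
    simp [InnerProductSpace.toDual_apply_apply]
  -- fderiv of the loss
  set L : EuclideanSpace ℝ (Fin p) → ℝ := fun w => ∑ i, (1 / 2 : ℝ) * (f i w - y i) ^ 2 with hL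
  set F : EuclideanSpace ℝ (Fin p) →L[ℝ] ℝ :=
    ∑ i, (f i x - y i) • fderiv ℝ (f i) x with hF
  have hLd : HasFDerivAt L F x := by
    rw [hL, hF]
    apply HasFDerivAt.fun_sum
    intro i _
    have h1 : HasDerivAt (fun u : ℝ => (1 / 2 : ℝ) * (u - y i) ^ 2) (f i x - y i) (f i x) := by
      have := (((hasDerivAt_id (f i x)).sub_const (y i)).pow 2).const_mul (1 / 2 : ℝ)
      refine this.congr_deriv ?_
      simp
    have := h1.comp_hasFDerivAt x ((hf i) x).hasFDerivAt
    exact this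
  have hgradL : gradient L x = (InnerProductSpace.toDual ℝ _).symm F := by
    rw [gradient, hLd.fderiv]
  -- main composition
  have hcomp : HasDerivAt (fun s => f j (θ s)) (fderiv ℝ (f j) x (deriv θ t)) t :=
    ((hf j) x).hasFDerivAt.comp_hasDerivAt t (hθ t).hasDerivAt
  convert hcomp using 1
  rw [hflow t, ← hx, hfd j, inner_neg_right, hgradL, real_inner_comm,
    InnerProductSpace.toDual_symm_apply, hF]
  simp only [ContinuousLinearMap.sum_apply, ContinuousLinearMap.smul_apply, smul_eq_mul,
    neg_inj]
  refine Finset.sum_congr rfl fun i _ => ?_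
  rw [hfd i, real_inner_comm]
  ring
end

section
/- Let p, k, n be positive integers. For each task i : Fin k and data point u : Fin n, let f i u : EuclideanSpace ℝ (Fin p) → ℝ be a differentiable function, let y : Fin k → Fin n → ℝ be labels, and let ω : Fin k → ℝ be task weights. Define the weighted multi-task loss L(θ) = Σ_{i} ω i · Σ_{u} (1/2)·(f i u θ − y i u)². Suppose θ : ℝ → EuclideanSpace ℝ (Fin p) is differentiable and satisfies θ'(t) = −∇L(θ(t)) for all t ∈ ℝ. Then for every task j : Fin k, data point v : Fin n, and t ∈ ℝ, the map t ↦ ω j · f j v (θ(t)) is differentiable at t with derivative d/dt [ω j · f j v (θ(t))] = − Σ_{i} Σ_{u} ω j · ω i · ⟨∇(f j v)(θ(t)), ∇(f i u)(θ(t))⟩ · (f i u (θ(t)) − y i u). -/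
open scoped RealInnerProductSpace

section Aux

variable {F : Type*} [NormedAddCommGroup F] [InnerProductSpace ℝ F] [CompleteSpace F]

lemma fderiv_eq_inner_gradient (f : F → ℝ) (x : F) (z : F) :
    fderiv ℝ f x z = ⟪ gradient f x, z⟫ := by
  rw [gradient]; simp

lemma sq_loss_hasGradientAt {g : F → ℝ} {x : F} (h : DifferentiableAt ℝ g x) (c : ℝ) :
    HasGradientAt (fun w => (1 / 2 : ℝ) * (g w - c) ^ 2)
      ((g x - c) • gradient g x) x := by
  have hg := h.hasGradientAt
  rw [hasGradientAt_iff_hasFDerivAt] at hg ⊢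
  rw [map_smul]
  have hsub : HasFDerivAt (fun w => g w - c) (InnerProductSpace.toDual ℝ F (gradient g x)) x :=
    hg.sub_const c
  have := (hsub.mul hsub).const_mul (1/2 : ℝ)
  convert this using 1
  · ext w; ring
  · ext z; simp; ring
  · ext z; simp only [ContinuousLinearMap.smul_apply, ContinuousLinearMap.add_apply, smul_eq_mul]; ring

lemma HasGradientAt.const_mul' {g : F → ℝ} {g' x : F} (c : ℝ) (h : HasGradientAt g g' x) :
    HasGradientAt (fun w => c * g w) (c • g') x := by
  rw [hasGradientAt_iff_hasFDerivAt] at h ⊢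
  rw [map_smul]
  exact h.const_mul c

lemma hasGradientAt_sum {ι : Type*} (s : Finset ι) {g : ι → F → ℝ} {g' : ι → F} {x : F}
    (h : ∀ i ∈ s, HasGradientAt (g i) (g' i) x) :
    HasGradientAt (fun w => ∑ i ∈ s, g i w) (∑ i ∈ s, g' i) x := by
  rw [hasGradientAt_iff_hasFDerivAt, map_sum]
  exact HasFDerivAt.fun_sum fun i hi => (h i hi).hasFDerivAt

end Aux

/-- Proposition 3.3 (weighted extended NTK evolution in multi-task learning):
along a gradient-flow trajectory for the weighted multi-task squared loss, the
rescaled task outputs ω_j · f_j evolve according to the weighted extended NTK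
matrix ωωᵀ ⊙ K̃. -/
theorem ntk_mtl_weighted_gradient_flow_evolution
    (p k n : ℕ) (hp : 0 < p) (hk : 0 < k) (hn : 0 < n)
    (f : Fin k → Fin n → EuclideanSpace ℝ (Fin p) → ℝ)
    (hf : ∀ i u, Differentiable ℝ (f i u))
    (y : Fin k → Fin n → ℝ)
    (ω : Fin k → ℝ)
    (θ : ℝ → EuclideanSpace ℝ (Fin p))
    (hθ : Differentiable ℝ θ)
    (hflow : ∀ t : ℝ, deriv θ t =
      -gradient (fun w => ∑ i, ω i * ∑ u, (1 / 2 : ℝ) * (f i u w - y i u) ^ 2) (θ t))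
    (j : Fin k) (v : Fin n) (t : ℝ) :
    HasDerivAt (fun s => ω j * f j v (θ s))
      (-∑ i, ∑ u,
        ω j * ω i * ⟪gradient (f j v) (θ t), gradient (f i u) (θ t)⟫
          * (f i u (θ t) - y i u)) t := by
  set x := θ t with hx
  have hL : HasGradientAt (fun w => ∑ i, ω i * ∑ u, (1 / 2 : ℝ) * (f i u w - y i u) ^ 2)
      (∑ i, ω i • ∑ u, (f i u x - y i u) • gradient (f i u) x) x := by
    refine hasGradientAt_sum _ fun i _ => ?_
    exact (hasGradientAt_sum _ fun u _ =>
      sq_loss_hasGradientAt ((hf i u).differentiableAt) (y i u)).const_mul' (ω i)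
  have hGrad : gradient (fun w => ∑ i, ω i * ∑ u, (1 / 2 : ℝ) * (f i u w - y i u) ^ 2) x
      = ∑ i, ω i • ∑ u, (f i u x - y i u) • gradient (f i u) x := hL.gradient
  have hcomp : HasDerivAt (fun s => f j v (θ s)) (fderiv ℝ (f j v) x (deriv θ t)) t :=
    ((hf j v).differentiableAt.hasFDerivAt).comp_hasDerivAt t (hθ t).hasDerivAt
  have := hcomp.const_mul (ω j)
  convert this using 1
  · rfl
  · rfl
  rw [fderiv_eq_inner_gradient, hflow t, ← hx, hGrad]
  rw [inner_neg_right]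
  simp only [inner_sum, inner_smul_right, Finset.mul_sum, neg_neg, mul_neg,
    ← Finset.sum_neg_distrib]
  refine Finset.sum_congr rfl fun i _ => Finset.sum_congr rfl fun u _ => by ring
end
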